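/- (Separation property of the reservoir model.) Let A ∈ M_N(ℝ) be an invertible matrix (equivalently, a matrix having no zero eigenvalues), let g: ℝ → ℝ^N be injective, and let x_0 ∈ ℝ^N. Let z, z': ℤ → ℝ be two input signals that coincide at every time except at some s ∈ ℤ, i.e. z(t) = z'(t) for all t ≠ s and z(s) ≠ z'(s). Suppose x, x': ℤ → ℝ^N satisfy the recursions x(t) = x_0 + A(x(t−1) − x_0) + g(z(t)) and x'(t) = x_0 + A(x'(t−1) − x_0) + g(z'(t)) for all t ∈ ℤ, and that x(t) = x'(t) for all t < s. Then x(t) ≠ x'(t) for every t ≥ s. -/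

import Mathlib

/-- **separation property of the reservoir model.** If `A` is an
invertible matrix, `g : ℝ → ℝᴺ` is injective, and the inputs `z`, `z'` coincide
everywhere except at time `s`, then the corresponding reservoir trajectories
`x(t) = x₀ + A(x(t−1) − x₀) + g(z(t))` and
`x'(t) = x₀ + A(x'(t−1) − x₀) + g(z'(t))`, which agree before time `s`, satisfy
`x(t) ≠ x'(t)` for every `t ≥ s`. -/
theorem reservoir_model_separation_property
    {N : ℕ} (A : Matrix (Fin N) (Fin N) ℝ) (hA : IsUnit A)
    (g : ℝ → Fin N → ℝ) (hg : Function.Injective g)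
    (x₀ : Fin N → ℝ) (z z' : ℤ → ℝ) (s : ℤ)
    (hzz' : ∀ t : ℤ, t ≠ s → z t = z' t) (hs : z s ≠ z' s)
    (x x' : ℤ → Fin N → ℝ)
    (hx : ∀ t : ℤ, x t = x₀ + A.mulVec (x (t - 1) - x₀) + g (z t))
    (hx' : ∀ t : ℤ, x' t = x₀ + A.mulVec (x' (t - 1) - x₀) + g (z' t))
    (hpast : ∀ t : ℤ, t < s → x t = x' t) :
    ∀ t : ℤ, s ≤ t → x t ≠ x' t := by
  have hAinj : Function.Injective A.mulVec :=
    Matrix.mulVec_injective_iff_isUnit.mpr hA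
  intro t ht
  refine Int.le_induction (motive := fun u _ => x u ≠ x' u) ?_ ?_ t ht
  · show x s ≠ x' s
    have h1 : x (s - 1) = x' (s - 1) := hpast _ (by omega)
    rw [hx s, hx' s, h1]
    intro h
    exact hs (hg (add_left_cancel h))
  · intro n hn hne
    show x (n + 1) ≠ x' (n + 1)
    change x n ≠ x' n at hne
    intro h
    rw [hx (n + 1), hx' (n + 1), hzz' (n + 1) (by omega)] at h
    have h2 := add_left_cancel (add_right_cancel h)
    simp only [add_sub_cancel_right] at h2
    exact hne (by
      have := hAinj h2
      exact sub_left_injective this)
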